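/- Let p, q, r ≥ 3 be integers and θ real. The Hermitian matrix H (unit diagonal, H₁₂ = cos(π/p), H₂₃ = cos(π/q), H₁₃ = cos(π/r)e^{iθ}) has signature (2,1) if and only if cos(θ) < (−1 + cos²(π/p) + cos²(π/q) + cos²(π/r)) / (2 cos(π/p) cos(π/q) cos(π/r)). -/

import Mathlib

open Real Complex Matrix

lemma trace_eq_sum_eig' {A : Matrix (Fin 3) (Fin 3) ℂ} (hA : A.IsHermitian) :
    A.trace = ∑ i, (hA.eigenvalues i : ℂ) := by
  conv_lhs => rw [hA.spectral_theorem]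
  rw [Unitary.conjStarAlgAut_apply, Matrix.trace_mul_cycle]
  rw [(Matrix.mem_unitaryGroup_iff').mp (hA.eigenvectorUnitary).2, Matrix.one_mul,
    Matrix.trace_diagonal]
  rfl

lemma key_sign_count (f : Fin 3 → ℝ) (hsum : f 0 + f 1 + f 2 = 3) :
    ((Finset.univ.filter fun i => 0 < f i).card = 2 ∧
      (Finset.univ.filter fun i => f i < 0).card = 1) ↔ f 0 * f 1 * f 2 < 0 := by
  have h1 : (Finset.univ.filter fun i => 0 < f i).card =
      (if 0 < f 0 then 1 else 0) + (if 0 < f 1 then 1 else 0) + (if 0 < f 2 then 1 else 0) := by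
    rw [Finset.card_filter, Fin.sum_univ_three]
  have h2 : (Finset.univ.filter fun i => f i < 0).card =
      (if f 0 < 0 then 1 else 0) + (if f 1 < 0 then 1 else 0) + (if f 2 < 0 then 1 else 0) := by
    rw [Finset.card_filter, Fin.sum_univ_three]
  rcases lt_trichotomy (f 0) 0 with ha|ha|ha <;>
  rcases lt_trichotomy (f 1) 0 with hb|hb|hb <;>
  rcases lt_trichotomy (f 2) 0 with hc|hc|hc <;>
    simp [h1, h2, ha, hb, hc, not_lt.2 ha.le, not_lt.2 hb.le, not_lt.2 hc.le] <;>
    first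
      | linarith
      | nlinarith [mul_pos_of_neg_of_neg ha hb, hc]
      | nlinarith [mul_pos_of_neg_of_neg ha hc, hb]
      | nlinarith [mul_pos_of_neg_of_neg hb hc, ha]
      | nlinarith [mul_pos hb hc, ha]
      | nlinarith [mul_pos ha hc, hb]
      | nlinarith [mul_pos ha hb, hc]
      | nlinarith [mul_pos (mul_pos ha hb) hc]

lemma cos_pos_of_three_le (p : ℤ) (hp : 3 ≤ p) : 0 < Real.cos (π / p) := by
  have hp' : (3 : ℝ) ≤ (p : ℝ) := by exact_mod_cast hp
  apply Real.cos_pos_of_mem_Ioo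
  constructor
  · have : 0 ≤ π / p := by positivity
    linarith [Real.pi_pos]
  · rw [div_lt_div_iff₀ (by linarith) (by norm_num)]
    nlinarith [Real.pi_pos]

/-- The Gram matrix of a complex hyperbolic (p,q,r) triangle group has signature (2,1)
(two positive and one negative eigenvalue) iff the stated bound on cos θ holds. -/
theorem gram_signature (p q r : ℤ) (hp : 3 ≤ p) (hq : 3 ≤ q) (hr : 3 ≤ r) (θ : ℝ)
    (H : Matrix (Fin 3) (Fin 3) ℂ)
    (hH : H = !![1, (Real.cos (π / p) : ℂ), (Real.cos (π / r) : ℂ) * Complex.exp (θ * Complex.I);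
         (Real.cos (π / p) : ℂ), 1, (Real.cos (π / q) : ℂ);
         (Real.cos (π / r) : ℂ) * Complex.exp (-θ * Complex.I), (Real.cos (π / q) : ℂ), 1])
    (hHerm : H.IsHermitian) :
    ((Finset.univ.filter fun i => 0 < hHerm.eigenvalues i).card = 2 ∧
      (Finset.univ.filter fun i => hHerm.eigenvalues i < 0).card = 1) ↔
    Real.cos θ < (-1 + Real.cos (π / p) ^ 2 + Real.cos (π / q) ^ 2 + Real.cos (π / r) ^ 2) /
      (2 * Real.cos (π / p) * Real.cos (π / q) * Real.cos (π / r)) := by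
  set a := Real.cos (π / p) with ha'
  set b := Real.cos (π / q) with hb'
  set c := Real.cos (π / r) with hc'
  have hap : 0 < a := cos_pos_of_three_le p hp
  have hbp : 0 < b := cos_pos_of_three_le q hq
  have hcp : 0 < c := cos_pos_of_three_le r hr
  -- determinant computation
  have hdet : H.det = ((1 - a ^ 2 - b ^ 2 - c ^ 2 + 2 * a * b * c * Real.cos θ : ℝ) : ℂ) := by
    have e1 : Complex.exp ((θ:ℂ) * Complex.I) * Complex.exp (-((θ:ℂ) * Complex.I)) = 1 := by
      rw [← Complex.exp_add]; norm_num
    have e2 : Complex.exp ((θ:ℂ) * Complex.I) + Complex.exp (-((θ:ℂ) * Complex.I))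
        = 2 * Complex.cos (θ:ℂ) := by
      rw [Complex.cos]; ring
    rw [hH, Matrix.det_fin_three]
    norm_num [ha', hb', hc']
    push_cast
    linear_combination (Complex.cos ((π:ℂ)/p) * Complex.cos ((π:ℂ)/q) * Complex.cos ((π:ℂ)/r)) * e2 -
      (Complex.cos ((π:ℂ)/r))^2 * e1
  -- eigenvalue sum
  have htr : H.trace = 3 := by rw [hH, Matrix.trace_fin_three]; simp; norm_num
  have hsum : hHerm.eigenvalues 0 + hHerm.eigenvalues 1 + hHerm.eigenvalues 2 = 3 := by
    have := trace_eq_sum_eig' hHerm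
    rw [htr, Fin.sum_univ_three] at this
    exact_mod_cast this.symm
  -- eigenvalue product
  have hprod : hHerm.eigenvalues 0 * hHerm.eigenvalues 1 * hHerm.eigenvalues 2
      = 1 - a ^ 2 - b ^ 2 - c ^ 2 + 2 * a * b * c * Real.cos θ := by
    have := hHerm.det_eq_prod_eigenvalues
    rw [hdet, Fin.prod_univ_three] at this
    have h2 : ((hHerm.eigenvalues 0 * hHerm.eigenvalues 1 * hHerm.eigenvalues 2 : ℝ) : ℂ)
        = ((1 - a ^ 2 - b ^ 2 - c ^ 2 + 2 * a * b * c * Real.cos θ : ℝ) : ℂ) := by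
      push_cast at this ⊢
      exact this.symm
    exact Complex.ofReal_inj.mp h2
  rw [key_sign_count _ hsum, hprod]
  rw [lt_div_iff₀ (by positivity)]
  constructor <;> intro h <;> nlinarith [h]
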